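/- Let u(t,x) be a C⁴ solution of u_t + u_x = 0 with u(t,0) = g(t), g four times differentiable. Define the RK stages at the PDE level by u^{(1)} = u^n − Δt ∂_x u^n and u^{(2)} = (3/4)u^n + (1/4)u^{(1)} − (1/4)Δt ∂_x u^{(1)}, where u^n(x) = u(t_n,x). Then ∂_x u^{(2)}(0) = −g'(t_n) − (1/2)Δt g''(t_n) − (1/4)Δt² g'''(t_n). -/

import Mathlib

private lemma aux_deriv (f : ℝ → ℝ) (hf : Differentiable ℝ f) (tn x : ℝ) :
    HasDerivAt (fun y => f (tn - y)) (-(deriv f (tn - x))) x := by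
  have h1 : HasDerivAt (fun y : ℝ => tn - y) (-1) x := by
    exact (hasDerivAt_id x).const_sub tn
  have := (hf (tn - x)).hasDerivAt.comp x h1
  simpa [Function.comp_def] using this

/-- for a C⁴ solution of u_t + u_x = 0 with u(t,0) = g(t) and
RK stages u⁽¹⁾ = uⁿ - Δt ∂ₓuⁿ, u⁽²⁾ = (3/4)uⁿ + (1/4)u⁽¹⁾ - (1/4)Δt ∂ₓu⁽¹⁾,
one has ∂ₓ u⁽²⁾(0) = -g'(tₙ) - (1/2)Δt g''(tₙ) - (1/4)Δt² g'''(tₙ). -/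
theorem stmt3 (u : ℝ × ℝ → ℝ) (g : ℝ → ℝ) (Δt tn : ℝ)
    (hu : ContDiff ℝ 4 u)
    (hg1 : Differentiable ℝ g)
    (hg2 : Differentiable ℝ (deriv g))
    (hg3 : Differentiable ℝ (deriv (deriv g)))
    (hg4 : Differentiable ℝ (deriv (deriv (deriv g))))
    (hΔt : 0 < Δt)
    (hpde : ∀ t x : ℝ,
      deriv (fun s => u (s, x)) t + deriv (fun y => u (t, y)) x = 0)
    (hbc : ∀ t : ℝ, u (t, 0) = g t)
    (un u1 u2 : ℝ → ℝ)
    (hun : ∀ x : ℝ, un x = u (tn, x))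
    (hu1 : ∀ x : ℝ, u1 x = un x - Δt * deriv un x)
    (hu2 : ∀ x : ℝ, u2 x = (3/4) * un x + (1/4) * u1 x - (1/4) * Δt * deriv u1 x) :
    deriv u2 0 = - deriv g tn - (1/2) * Δt * deriv (deriv g) tn
      - (1/4) * Δt^2 * deriv (deriv (deriv g)) tn := by
  have hud : Differentiable ℝ u := hu.differentiable (by norm_num)
  -- Step 1 : u (t, x) = g (t - x)
  have key : ∀ t x : ℝ, u (t, x) = g (t - x) := by
    intro t x
    set φ : ℝ → ℝ := fun s => u (t - x + s, s) with hφdef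
    have hφ : ∀ s, HasDerivAt φ 0 s := by
      intro s
      have hup : HasFDerivAt u (fderiv ℝ u (t - x + s, s)) (t - x + s, s) :=
        (hud (t - x + s, s)).hasFDerivAt
      have hline : HasDerivAt (fun s : ℝ => ((t - x + s, s) : ℝ × ℝ)) (1, 1) s := by
        have := ((hasDerivAt_const s (t - x)).add (hasDerivAt_id s)).prodMk (hasDerivAt_id s)
        simpa using this
      have hcomp : HasDerivAt φ (fderiv ℝ u (t - x + s, s) (1, 1)) s := by
        have := hup.comp_hasDerivAt_of_eq s hline rfl
        exact this
      have h10 : HasDerivAt (fun a => u (a, s)) (fderiv ℝ u (t - x + s, s) (1, 0)) (t - x + s) := by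
        have hl : HasDerivAt (fun a : ℝ => ((a, s) : ℝ × ℝ)) ((1 : ℝ), (0 : ℝ)) (t - x + s) :=
          (hasDerivAt_id _).prodMk (hasDerivAt_const _ _)
        have := hup.comp_hasDerivAt_of_eq (t - x + s) hl rfl
        exact this
      have h01 : HasDerivAt (fun b => u (t - x + s, b)) (fderiv ℝ u (t - x + s, s) (0, 1)) s := by
        have hl : HasDerivAt (fun b : ℝ => ((t - x + s, b) : ℝ × ℝ)) ((0 : ℝ), (1 : ℝ)) s :=
          (hasDerivAt_const _ _).prodMk (hasDerivAt_id _)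
        have := hup.comp_hasDerivAt_of_eq s hl rfl
        exact this
      have hsum := hpde (t - x + s) s
      rw [h10.deriv, h01.deriv] at hsum
      have h11 : fderiv ℝ u (t - x + s, s) (1, 1) = 0 := by
        have he : ((1 : ℝ), (1 : ℝ)) = ((1 : ℝ), (0 : ℝ)) + ((0 : ℝ), (1 : ℝ)) := by
          simp [Prod.ext_iff]
        rw [he, map_add]
        exact hsum
      rwa [h11] at hcomp
    have hconst := is_const_of_deriv_eq_zero (fun s => (hφ s).differentiableAt)
      (fun s => (hφ s).deriv) x 0
    have hx : φ x = u (t, x) := by simp [hφdef]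
    have h0 : φ 0 = g (t - x) := by simp [hφdef, hbc]
    rw [← hx, hconst, h0]
  -- rewrite un, u1, u2 in terms of g
  have hung : un = fun x => g (tn - x) := by
    funext x; rw [hun]; exact key tn x
  have hdun : ∀ x, deriv un x = -(deriv g (tn - x)) := by
    intro x; rw [hung]; exact (aux_deriv g hg1 tn x).deriv
  have hu1g : u1 = fun x => g (tn - x) + Δt * deriv g (tn - x) := by
    funext x; rw [hu1, hdun, hung]; ring
  have hdu1 : ∀ x, deriv u1 x = -(deriv g (tn - x)) - Δt * deriv (deriv g) (tn - x) := by
    intro x; rw [hu1g]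
    have := (aux_deriv g hg1 tn x).add ((aux_deriv (deriv g) hg2 tn x).const_mul Δt)
    rw [(show HasDerivAt (fun x => g (tn - x) + Δt * deriv g (tn - x)) (-deriv g (tn - x) + Δt * -deriv (deriv g) (tn - x)) x from this).deriv]; ring
  have hu2g : u2 = fun x => g (tn - x) + (1/2) * Δt * deriv g (tn - x)
      + (1/4) * Δt^2 * deriv (deriv g) (tn - x) := by
    funext x; rw [hu2, hdu1, hu1g, hung]; ring
  rw [hu2g]
  have h := (aux_deriv g hg1 tn 0).add
    (((aux_deriv (deriv g) hg2 tn 0).const_mul ((1/2) * Δt)).add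
      ((aux_deriv (deriv (deriv g)) hg3 tn 0).const_mul ((1/4) * Δt^2)))
  have h' : HasDerivAt (fun x => g (tn - x) + (1/2) * Δt * deriv g (tn - x)
      + (1/4) * Δt^2 * deriv (deriv g) (tn - x))
      (-(deriv g (tn - 0)) + ((1/2) * Δt * -(deriv (deriv g) (tn - 0))
        + (1/4) * Δt^2 * -(deriv (deriv (deriv g)) (tn - 0)))) 0 := by
    have e : (fun x => g (tn - x) + (1/2) * Δt * deriv g (tn - x) + (1/4) * Δt^2 * deriv (deriv g) (tn - x)) = (fun y => g (tn - y)) + ((fun y => 1 / 2 * Δt * deriv g (tn - y)) + fun y => 1 / 4 * Δt ^ 2 * deriv (deriv g) (tn - y)) := by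
      funext y; simp only [Pi.add_apply]; ring
    rw [e]; exact h
  rw [h'.deriv]
  simp; ring
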